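/- Let H be a k-bialgebra and σ : H ⊗ H → k a k-bilinear map satisfying conditions (L2), (L3), (L4) and (L5) for all elements of H. Let S ⊆ H be a subset generating H as a k-algebra. If condition (L1), ∑ σ(x₍₁₎ ⊗ y) x₍₂₎ = ∑ σ(x₍₂₎ ⊗ y) x₍₁₎, holds for all x, y ∈ S, then (L1) holds for all x, y ∈ H. -/
import Mathlib

set_option maxHeartbeats 1000000
set_option synthInstance.maxHeartbeats 400000
set_option maxRecDepth 8000


open TensorProduct

noncomputable section

variable (k : Type*) [Field k] (H : Type*) [Ring H] [Algebra k H]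

/-- Condition (L1) for a comultiplication Δ and a bilinear map σ:
∑ σ(x₍₁₎ ⊗ y) x₍₂₎ = ∑ σ(x₍₂₎ ⊗ y) x₍₁₎, as an equality of linear maps H ⊗ H → H. -/
def CondL1 (Δ : H →ₗ[k] H ⊗[k] H) (σ : H ⊗[k] H →ₗ[k] k) : Prop :=
  (TensorProduct.rid k H).toLinearMap ∘ₗ
      TensorProduct.map LinearMap.id σ ∘ₗ
      (TensorProduct.assoc k H H H).toLinearMap ∘ₗ
      TensorProduct.map ((TensorProduct.comm k H H).toLinearMap ∘ₗ Δ) LinearMap.id =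
    (TensorProduct.rid k H).toLinearMap ∘ₗ
      TensorProduct.map LinearMap.id σ ∘ₗ
      (TensorProduct.assoc k H H H).toLinearMap ∘ₗ
      TensorProduct.map Δ LinearMap.id

/-- Condition (L2): σ(x ⊗ 1) = ε(x). -/
def CondL2 (ε : H →ₗ[k] k) (σ : H ⊗[k] H →ₗ[k] k) : Prop :=
  ∀ x : H, σ (x ⊗ₜ[k] (1 : H)) = ε x

/-- Condition (L3): σ(x ⊗ yz) = ∑ σ(x₍₁₎ ⊗ y) σ(x₍₂₎ ⊗ z),
as an equality of linear maps H ⊗ (H ⊗ H) → k. -/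
def CondL3 (Δ : H →ₗ[k] H ⊗[k] H) (σ : H ⊗[k] H →ₗ[k] k) : Prop :=
  σ ∘ₗ TensorProduct.map LinearMap.id (LinearMap.mul' k H) =
    (TensorProduct.lid k k).toLinearMap ∘ₗ
      TensorProduct.map σ σ ∘ₗ
      (TensorProduct.tensorTensorTensorComm k H H H H).toLinearMap ∘ₗ
      TensorProduct.map Δ LinearMap.id

/-- Condition (L4): σ(1 ⊗ x) = ε(x). -/
def CondL4 (ε : H →ₗ[k] k) (σ : H ⊗[k] H →ₗ[k] k) : Prop :=
  ∀ x : H, σ ((1 : H) ⊗ₜ[k] x) = ε x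

/-- Condition (L5): σ(xy ⊗ z) = ∑ σ(y ⊗ z₍₁₎) σ(x ⊗ z₍₂₎),
as an equality of linear maps (H ⊗ H) ⊗ H → k. -/
def CondL5 (Δ : H →ₗ[k] H ⊗[k] H) (σ : H ⊗[k] H →ₗ[k] k) : Prop :=
  σ ∘ₗ TensorProduct.map (LinearMap.mul' k H) LinearMap.id =
    (TensorProduct.lid k k).toLinearMap ∘ₗ
      TensorProduct.map σ σ ∘ₗ
      (TensorProduct.tensorTensorTensorComm k H H H H).toLinearMap ∘ₗ
      TensorProduct.map LinearMap.id Δ ∘ₗ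
      TensorProduct.map (TensorProduct.comm k H H).toLinearMap LinearMap.id

/-- (H, σ) is a Long bialgebra (relative to comultiplication Δ and counit ε):
conditions (L1)–(L5) hold. -/
def IsLongBialgebra (Δ : H →ₗ[k] H ⊗[k] H) (ε : H →ₗ[k] k)
    (σ : H ⊗[k] H →ₗ[k] k) : Prop :=
  CondL1 k H Δ σ ∧ CondL2 k H ε σ ∧ CondL3 k H Δ σ ∧ CondL4 k H ε σ ∧ CondL5 k H Δ σ

end

noncomputable section

variable (k : Type*) [Field k] (H : Type*) [Ring H] [Algebra k H]

/-- The left-hand side of (L1): x ⊗ y ↦ ∑ σ(x₍₁₎ ⊗ y) x₍₂₎. -/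
def L1lhs (Δ : H →ₗ[k] H ⊗[k] H) (σ : H ⊗[k] H →ₗ[k] k) : H ⊗[k] H →ₗ[k] H :=
  (TensorProduct.rid k H).toLinearMap ∘ₗ
    TensorProduct.map LinearMap.id σ ∘ₗ
    (TensorProduct.assoc k H H H).toLinearMap ∘ₗ
    TensorProduct.map ((TensorProduct.comm k H H).toLinearMap ∘ₗ Δ) LinearMap.id

/-- The right-hand side of (L1): x ⊗ y ↦ ∑ σ(x₍₂₎ ⊗ y) x₍₁₎. -/
def L1rhs (Δ : H →ₗ[k] H ⊗[k] H) (σ : H ⊗[k] H →ₗ[k] k) : H ⊗[k] H →ₗ[k] H :=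
  (TensorProduct.rid k H).toLinearMap ∘ₗ
    TensorProduct.map LinearMap.id σ ∘ₗ
    (TensorProduct.assoc k H H H).toLinearMap ∘ₗ
    TensorProduct.map Δ LinearMap.id

end

section Aux

variable {k : Type*} [Field k] {H : Type*} [Ring H] [Bialgebra k H]

/-- `kap σ M u w = ∑ σ(aᵢ ⊗ w) • mᵢ` for `u = ∑ aᵢ ⊗ mᵢ`. -/
noncomputable def kap (σ : H ⊗[k] H →ₗ[k] k) (M : Type*) [AddCommGroup M] [Module k M] :
    H ⊗[k] M →ₗ[k] H →ₗ[k] M :=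
  TensorProduct.lift
    (LinearMap.smulRightₗ ∘ₗ LinearMap.llcomp k H (H ⊗[k] H) k σ ∘ₗ TensorProduct.mk k H H)

variable (σ : H ⊗[k] H →ₗ[k] k)

@[simp] lemma kap_tmul {M : Type*} [AddCommGroup M] [Module k M] (a : H) (m : M) (w : H) :
    kap σ M (a ⊗ₜ[k] m) w = σ (a ⊗ₜ[k] w) • m := by
  simp [kap]

/-- The flip of the two factors, as a linear map. -/
noncomputable def cmH : H ⊗[k] H →ₗ[k] H ⊗[k] H := (TensorProduct.comm k H H).toLinearMap

@[simp] lemma cmH_tmul (a b : H) : (cmH : H ⊗[k] H →ₗ[k] H ⊗[k] H) (a ⊗ₜ[k] b) = b ⊗ₜ[k] a := rfl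

/-- Cyclic permutation `a ⊗ (b ⊗ c) ↦ c ⊗ (a ⊗ b)`. -/
noncomputable def etaM : H ⊗[k] (H ⊗[k] H) →ₗ[k] H ⊗[k] (H ⊗[k] H) :=
  (TensorProduct.comm k (H ⊗[k] H) H).toLinearMap ∘ₗ (TensorProduct.assoc k H H H).symm.toLinearMap

@[simp] lemma etaM_tmul (a b c : H) :
    (etaM : H ⊗[k] (H ⊗[k] H) →ₗ[k] H ⊗[k] (H ⊗[k] H)) (a ⊗ₜ[k] (b ⊗ₜ[k] c))
      = c ⊗ₜ[k] (a ⊗ₜ[k] b) := rfl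

/-- Swap of the first two legs `a ⊗ (b ⊗ c) ↦ b ⊗ (a ⊗ c)`. -/
noncomputable def zetaM : H ⊗[k] (H ⊗[k] H) →ₗ[k] H ⊗[k] (H ⊗[k] H) :=
  (TensorProduct.leftComm k H H H).toLinearMap

@[simp] lemma zetaM_tmul (a b c : H) :
    (zetaM : H ⊗[k] (H ⊗[k] H) →ₗ[k] H ⊗[k] (H ⊗[k] H)) (a ⊗ₜ[k] (b ⊗ₜ[k] c))
      = b ⊗ₜ[k] (a ⊗ₜ[k] c) := rfl

lemma L1lhs_apply (x y : H) :
    L1lhs k H (Coalgebra.comul : H →ₗ[k] H ⊗[k] H) σ (x ⊗ₜ[k] y)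
      = kap σ H (Coalgebra.comul (R := k) x) y := by
  have key : ∀ u : H ⊗[k] H,
      (TensorProduct.rid k H)
        (TensorProduct.map LinearMap.id σ
          ((TensorProduct.assoc k H H H)
            (((TensorProduct.comm k H H) u) ⊗ₜ[k] y))) = kap σ H u y := by
    intro u
    induction u using TensorProduct.induction_on with
    | zero => simp
    | tmul a b => simp
    | add u v hu hv => simp only [map_add, TensorProduct.add_tmul, hu, hv, LinearMap.add_apply]
  simpa [L1lhs] using key (Coalgebra.comul (R := k) x)

lemma L1rhs_apply (x y : H) :
    L1rhs k H (Coalgebra.comul : H →ₗ[k] H ⊗[k] H) σ (x ⊗ₜ[k] y)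
      = kap σ H (cmH (Coalgebra.comul (R := k) x)) y := by
  have key : ∀ u : H ⊗[k] H,
      (TensorProduct.rid k H)
        (TensorProduct.map LinearMap.id σ
          ((TensorProduct.assoc k H H H) (u ⊗ₜ[k] y))) = kap σ H (cmH u) y := by
    intro u
    induction u using TensorProduct.induction_on with
    | zero => simp
    | tmul a b => simp
    | add u v hu hv => simp only [map_add, TensorProduct.add_tmul, hu, hv, LinearMap.add_apply]
  simpa [L1rhs] using key (Coalgebra.comul (R := k) x)

lemma kap_comul_one (hL2 : CondL2 k H (Coalgebra.counit : H →ₗ[k] k) σ) (x : H) :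
    kap σ H (Coalgebra.comul (R := k) x) 1 = x := by
  have key : ∀ u : H ⊗[k] H,
      kap σ H u 1 = (TensorProduct.lid k H)
        ((Coalgebra.counit : H →ₗ[k] k).rTensor H u) := by
    intro u
    induction u using TensorProduct.induction_on with
    | zero => simp
    | tmul a b => simp [hL2 a]
    | add u v hu hv => simp only [map_add, hu, hv, LinearMap.add_apply]
  rw [key, Coalgebra.rTensor_counit_comul]
  simp

lemma kap_cmH_comul_one (hL2 : CondL2 k H (Coalgebra.counit : H →ₗ[k] k) σ) (x : H) :
    kap σ H (cmH (Coalgebra.comul (R := k) x)) 1 = x := by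
  have key : ∀ u : H ⊗[k] H,
      kap σ H (cmH u) 1 = (TensorProduct.rid k H)
        ((Coalgebra.counit : H →ₗ[k] k).lTensor H u) := by
    intro u
    induction u using TensorProduct.induction_on with
    | zero => simp
    | tmul a b => simp [hL2 b]
    | add u v hu hv => simp only [map_add, hu, hv, LinearMap.add_apply]
  rw [key, Coalgebra.lTensor_counit_comul]
  simp

/-- (L3) in `kap` form: `kap u (y z) = ∑ σ(a₁ ⊗ y) σ(a₂ ⊗ z) • b`. -/
lemma kap_mul_right (hL3 : CondL3 k H (Coalgebra.comul : H →ₗ[k] H ⊗[k] H) σ)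
    (u : H ⊗[k] H) (y z : H) :
    kap σ H u (y * z)
      = kap σ H (kap σ (H ⊗[k] H)
          ((TensorProduct.assoc k H H H)
            ((Coalgebra.comul : H →ₗ[k] H ⊗[k] H).rTensor H u)) y) z := by
  unfold CondL3 at hL3
  induction u using TensorProduct.induction_on with
  | zero => simp
  | add u v hu hv => simp only [map_add, hu, hv, LinearMap.add_apply]
  | tmul a b =>
    have h3 := LinearMap.congr_fun hL3 (a ⊗ₜ[k] (y ⊗ₜ[k] z))
    simp only [LinearMap.coe_comp, Function.comp_apply, TensorProduct.map_tmul,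
      LinearMap.id_coe, id_eq, LinearMap.mul'_apply, LinearEquiv.coe_coe] at h3
    rw [kap_tmul, h3]
    rw [LinearMap.rTensor_tmul]
    generalize (Coalgebra.comul (R := k) a) = v
    induction v using TensorProduct.induction_on with
    | zero => simp
    | tmul p q =>
      simp only [TensorProduct.tensorTensorTensorComm_tmul, TensorProduct.map_tmul,
        TensorProduct.lid_tmul, TensorProduct.assoc_tmul, kap_tmul, map_smul,
        LinearMap.smul_apply, smul_eq_mul, mul_smul]
    | add v w hv hw =>
      simp only [TensorProduct.add_tmul, map_add, LinearMap.add_apply, add_smul, hv, hw]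

/-- Applying `comul` to `kap u y`. -/
lemma comul_kap (u : H ⊗[k] H) (y : H) :
    (Coalgebra.comul : H →ₗ[k] H ⊗[k] H) (kap σ H u y)
      = kap σ (H ⊗[k] H) ((Coalgebra.comul : H →ₗ[k] H ⊗[k] H).lTensor H u) y := by
  induction u using TensorProduct.induction_on with
  | zero => simp
  | tmul a b => simp
  | add u v hu hv => simp only [map_add, LinearMap.add_apply, hu, hv]

/-- Swapping the order of two contractions. -/
lemma kap_swap (w : H ⊗[k] (H ⊗[k] H)) (y z : H) :
    kap σ H (kap σ (H ⊗[k] H) w y) z = kap σ H (kap σ (H ⊗[k] H) (zetaM w) z) y := by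
  induction w using TensorProduct.induction_on with
  | zero => simp
  | add u v hu hv => simp only [map_add, LinearMap.add_apply, hu, hv]
  | tmul a m =>
    induction m using TensorProduct.induction_on with
    | zero => simp
    | tmul p q => simp [smul_smul, mul_comm]
    | add m n hm hn =>
      simp only [TensorProduct.tmul_add, map_add, LinearMap.add_apply, hm, hn]

lemma kap_lTensor_cmH (w : H ⊗[k] (H ⊗[k] H)) (z : H) :
    kap σ (H ⊗[k] H) ((cmH : H ⊗[k] H →ₗ[k] H ⊗[k] H).lTensor H w) z
      = cmH (kap σ (H ⊗[k] H) w z) := by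
  induction w using TensorProduct.induction_on with
  | zero => simp
  | tmul a m => simp
  | add u v hu hv => simp only [map_add, LinearMap.add_apply, hu, hv]

lemma zetaM_etaM (w : H ⊗[k] (H ⊗[k] H)) :
    zetaM (etaM w) = (cmH : H ⊗[k] H →ₗ[k] H ⊗[k] H).lTensor H w := by
  induction w using TensorProduct.induction_on with
  | zero => simp
  | add u v hu hv => simp only [map_add, hu, hv]
  | tmul a m =>
    induction m using TensorProduct.induction_on with
    | zero => simp
    | tmul p q => simp
    | add m n hm hn => simp only [TensorProduct.tmul_add, map_add, hm, hn]

lemma etaM_assoc_rTensor (u : H ⊗[k] H) :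
    etaM ((TensorProduct.assoc k H H H)
        ((Coalgebra.comul : H →ₗ[k] H ⊗[k] H).rTensor H u))
      = (Coalgebra.comul : H →ₗ[k] H ⊗[k] H).lTensor H (cmH u) := by
  induction u using TensorProduct.induction_on with
  | zero => simp
  | add u v hu hv => simp only [map_add, hu, hv]
  | tmul a b =>
    rw [LinearMap.rTensor_tmul, cmH_tmul, LinearMap.lTensor_tmul]
    generalize (Coalgebra.comul (R := k) a) = v
    induction v using TensorProduct.induction_on with
    | zero => simp
    | tmul p q => simp
    | add v w hv hw => simp only [TensorProduct.add_tmul, TensorProduct.tmul_add, map_add, hv, hw]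

lemma perm_rho (u : H ⊗[k] H) :
    zetaM ((cmH : H ⊗[k] H →ₗ[k] H ⊗[k] H).lTensor H
        (etaM ((Coalgebra.comul : H →ₗ[k] H ⊗[k] H).lTensor H u)))
      = (TensorProduct.assoc k H H H)
          ((Coalgebra.comul : H →ₗ[k] H ⊗[k] H).rTensor H (cmH u)) := by
  induction u using TensorProduct.induction_on with
  | zero => simp
  | add u v hu hv => simp only [map_add, hu, hv]
  | tmul a b =>
    rw [LinearMap.lTensor_tmul, cmH_tmul, LinearMap.rTensor_tmul]
    generalize (Coalgebra.comul (R := k) b) = v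
    induction v using TensorProduct.induction_on with
    | zero => simp
    | tmul p q => simp
    | add v w hv hw => simp only [TensorProduct.add_tmul, TensorProduct.tmul_add, map_add, hv, hw]

/-- (L5) in `kap` form: multiplicativity of `u ↦ kap u` up to a twist. -/
lemma kap_mul_left (hL5 : CondL5 k H (Coalgebra.comul : H →ₗ[k] H ⊗[k] H) σ)
    (u u' : H ⊗[k] H) (y : H) :
    kap σ H (u * u') y
      = LinearMap.mul' k H
          (TensorProduct.map (kap σ H u) (kap σ H u') (cmH (Coalgebra.comul (R := k) y))) := by
  unfold CondL5 at hL5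
  induction u using TensorProduct.induction_on with
  | zero => simp
  | add u v hu hv =>
    simp only [add_mul, map_add, LinearMap.add_apply, hu, hv,
      TensorProduct.map_add_left]
  | tmul a b =>
    induction u' using TensorProduct.induction_on with
    | zero => simp
    | add u v hu hv =>
      simp only [mul_add, map_add, LinearMap.add_apply, hu, hv,
        TensorProduct.map_add_right]
    | tmul a' b' =>
      rw [Algebra.TensorProduct.tmul_mul_tmul, kap_tmul]
      have h5 := LinearMap.congr_fun hL5 ((a ⊗ₜ[k] a') ⊗ₜ[k] y)
      simp only [LinearMap.coe_comp, Function.comp_apply, TensorProduct.map_tmul,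
        LinearMap.id_coe, id_eq, LinearMap.mul'_apply, LinearEquiv.coe_coe,
        TensorProduct.comm_tmul] at h5
      rw [h5]
      generalize (Coalgebra.comul (R := k) y) = v
      induction v using TensorProduct.induction_on with
      | zero => simp
      | tmul c d =>
        simp only [TensorProduct.tensorTensorTensorComm_tmul, TensorProduct.map_tmul,
          TensorProduct.lid_tmul, cmH_tmul, kap_tmul, LinearMap.mul'_apply,
          smul_mul_assoc, mul_smul_comm, smul_eq_mul, smul_smul]
      | add v w hv hw =>
        simp only [TensorProduct.tmul_add, map_add, LinearMap.add_apply, add_smul, hv, hw]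

lemma cmH_mul (u u' : H ⊗[k] H) : cmH (u * u') = cmH u * cmH u' := by
  induction u using TensorProduct.induction_on with
  | zero => simp
  | add u v hu hv => simp only [add_mul, map_add, hu, hv]
  | tmul a b =>
    induction u' using TensorProduct.induction_on with
    | zero => simp
    | add u v hu hv => simp only [mul_add, map_add, hu, hv]
    | tmul a' b' => simp [Algebra.TensorProduct.tmul_mul_tmul]

end Aux

theorem L1_of_L1_on_generators
    {k : Type*} [Field k] {H : Type*} [Ring H] [Bialgebra k H]
    (σ : H ⊗[k] H →ₗ[k] k)
    (hL2 : CondL2 k H (Coalgebra.counit : H →ₗ[k] k) σ)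
    (hL3 : CondL3 k H (Coalgebra.comul : H →ₗ[k] H ⊗[k] H) σ)
    (hL4 : CondL4 k H (Coalgebra.counit : H →ₗ[k] k) σ)
    (hL5 : CondL5 k H (Coalgebra.comul : H →ₗ[k] H ⊗[k] H) σ)
    (S : Set H) (hS : Algebra.adjoin k S = ⊤)
    (hL1gen : ∀ x ∈ S, ∀ y ∈ S,
      L1lhs k H (Coalgebra.comul : H →ₗ[k] H ⊗[k] H) σ (x ⊗ₜ[k] y) =
      L1rhs k H (Coalgebra.comul : H →ₗ[k] H ⊗[k] H) σ (x ⊗ₜ[k] y)) :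
    CondL1 k H (Coalgebra.comul : H →ₗ[k] H ⊗[k] H) σ := by
  -- Stage 1: (L1) holds for x a generator and y arbitrary.
  have stage1 : ∀ x ∈ S, ∀ y : H,
      kap σ H (Coalgebra.comul (R := k) x) y = kap σ H (cmH (Coalgebra.comul (R := k) x)) y := by
    intro x hx y
    have hy : y ∈ Algebra.adjoin k S := by rw [hS]; trivial
    induction hy using Algebra.adjoin_induction with
    | mem s hs =>
      have := hL1gen x hx s hs
      rwa [L1lhs_apply, L1rhs_apply] at this
    | algebraMap r =>
      rw [Algebra.algebraMap_eq_smul_one, map_smul, map_smul,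
        kap_comul_one σ hL2, kap_cmH_comul_one σ hL2]
    | add y z hy hz ihy ihz => rw [map_add, map_add, ihy, ihz]
    | mul y z hy hz ihy ihz =>
      set T := (Coalgebra.comul : H →ₗ[k] H ⊗[k] H).lTensor H (Coalgebra.comul (R := k) x) with hT
      have Iy : kap σ (H ⊗[k] H) T y = kap σ (H ⊗[k] H) (etaM T) y := by
        have h := congrArg (Coalgebra.comul : H →ₗ[k] H ⊗[k] H) ihy
        rw [comul_kap, comul_kap, ← etaM_assoc_rTensor, Coalgebra.coassoc_apply] at h
        exact h
      have Iz : kap σ (H ⊗[k] H) T z = kap σ (H ⊗[k] H) (etaM T) z := by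
        have h := congrArg (Coalgebra.comul : H →ₗ[k] H ⊗[k] H) ihz
        rw [comul_kap, comul_kap, ← etaM_assoc_rTensor, Coalgebra.coassoc_apply] at h
        exact h
      calc kap σ H (Coalgebra.comul (R := k) x) (y * z)
          = kap σ H (kap σ (H ⊗[k] H)
              ((TensorProduct.assoc k H H H)
                ((Coalgebra.comul : H →ₗ[k] H ⊗[k] H).rTensor H (Coalgebra.comul (R := k) x))) y) z :=
            kap_mul_right σ hL3 _ y z
        _ = kap σ H (kap σ (H ⊗[k] H) T y) z := by rw [Coalgebra.coassoc_apply]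
        _ = kap σ H (kap σ (H ⊗[k] H) (etaM T) y) z := by rw [Iy]
        _ = kap σ H (kap σ (H ⊗[k] H) (zetaM (etaM T)) z) y := kap_swap σ _ y z
        _ = kap σ H (kap σ (H ⊗[k] H)
              ((cmH : H ⊗[k] H →ₗ[k] H ⊗[k] H).lTensor H T) z) y := by rw [zetaM_etaM]
        _ = kap σ H (cmH (kap σ (H ⊗[k] H) T z)) y := by rw [kap_lTensor_cmH]
        _ = kap σ H (cmH (kap σ (H ⊗[k] H) (etaM T) z)) y := by rw [Iz]
        _ = kap σ H (kap σ (H ⊗[k] H)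
              ((cmH : H ⊗[k] H →ₗ[k] H ⊗[k] H).lTensor H (etaM T)) z) y := by
            rw [kap_lTensor_cmH]
        _ = kap σ H (kap σ (H ⊗[k] H)
              (zetaM ((cmH : H ⊗[k] H →ₗ[k] H ⊗[k] H).lTensor H (etaM T))) y) z :=
            kap_swap σ _ z y
        _ = kap σ H (kap σ (H ⊗[k] H)
              ((TensorProduct.assoc k H H H)
                ((Coalgebra.comul : H →ₗ[k] H ⊗[k] H).rTensor H
                  (cmH (Coalgebra.comul (R := k) x)))) y) z := by rw [hT, perm_rho]
        _ = kap σ H (cmH (Coalgebra.comul (R := k) x)) (y * z) := (kap_mul_right σ hL3 _ y z).symm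
  -- Stage 2: (L1) holds everywhere.
  have main : ∀ x y : H,
      kap σ H (Coalgebra.comul (R := k) x) y = kap σ H (cmH (Coalgebra.comul (R := k) x)) y := by
    intro x
    have hx : x ∈ Algebra.adjoin k S := by rw [hS]; trivial
    induction hx using Algebra.adjoin_induction with
    | mem s hs => exact stage1 s hs
    | algebraMap r =>
      intro y
      have hcm : cmH (Coalgebra.comul (R := k) (algebraMap k H r))
          = Coalgebra.comul (R := k) (algebraMap k H r) := by
        rw [Bialgebra.comul_algebraMap]
        simp [Algebra.TensorProduct.algebraMap_apply, Algebra.algebraMap_eq_smul_one,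
          Algebra.TensorProduct.one_def, TensorProduct.smul_tmul]
      rw [hcm]
    | add x x' hx hx' ihx ihx' =>
      intro y
      simp only [map_add, LinearMap.add_apply, ihx y, ihx' y]
    | mul x x' hx hx' ihx ihx' =>
      intro y
      have e1 : kap σ H (Coalgebra.comul (R := k) x) = kap σ H (cmH (Coalgebra.comul (R := k) x)) :=
        LinearMap.ext ihx
      have e2 : kap σ H (Coalgebra.comul (R := k) x') = kap σ H (cmH (Coalgebra.comul (R := k) x')) :=
        LinearMap.ext ihx'
      rw [Bialgebra.comul_mul, kap_mul_left σ hL5, e1, e2, ← kap_mul_left σ hL5,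
        ← cmH_mul, ← Bialgebra.comul_mul]
  show L1lhs k H (Coalgebra.comul : H →ₗ[k] H ⊗[k] H) σ
      = L1rhs k H (Coalgebra.comul : H →ₗ[k] H ⊗[k] H) σ
  apply TensorProduct.ext'
  intro x y
  rw [L1lhs_apply, L1rhs_apply]
  exact main x y
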